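/- Suppose for each k ∈ {1,...,m} and each k' ≠ k, λ_{kk'} : [0,∞) → (0,∞) is measurable, bounded, continuous at 0, with λ_k(y) := Σ_{k'≠k} λ_{kk'}(y) and ∫₀^∞ λ_k = ∞. Define P(k,y) := ∫₀^∞ exp(-∫₀^{y'} Σ_{k'≠k} max(λ_{kk'}(t), λ_{kk'}(y+t)) dt) · (Σ_{k'≠k} min(λ_{kk'}(y'), λ_{kk'}(y+y'))) dy'. Then P(k,y) → 1 as y → 0⁺. -/

import Mathlib

open MeasureTheory Set Filter

open Topology

private lemma bddII {f : ℝ → ℝ} (hf : Measurable f) {C : ℝ} {a b : ℝ}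
    (h : ∀ t ∈ Set.uIoc a b, |f t| ≤ C) : IntervalIntegrable f volume a b := by
  rw [intervalIntegrable_iff]
  refine (integrableOn_const (C := C) measure_Ioc_lt_top.ne).mono'
    hf.aestronglyMeasurable.restrict ?_
  exact (ae_restrict_iff' measurableSet_uIoc).2 (ae_of_all _ fun t ht => by
    simpa [Real.norm_eq_abs] using h t ht)

private lemma abs_exp_neg_sub_exp_neg {x y : ℝ} (hx : 0 ≤ x) (hy : 0 ≤ y) :
    |Real.exp (-x) - Real.exp (-y)| ≤ |x - y| := by
  wlog h : y ≤ x generalizing x y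
  · rw [abs_sub_comm, abs_sub_comm x y]; exact this hy hx (le_of_not_ge h)
  have h1 : Real.exp (-x) ≤ Real.exp (-y) := Real.exp_le_exp.2 (by linarith)
  have h2 : Real.exp (-y) ≤ 1 := by
    calc Real.exp (-y) ≤ Real.exp 0 := Real.exp_le_exp.2 (by linarith)
    _ = 1 := Real.exp_zero
  have h3 : Real.exp (-x) = Real.exp (-y) * Real.exp (y - x) := by
    rw [← Real.exp_add]; ring_nf
  have h4 : (y - x) + 1 ≤ Real.exp (y - x) := Real.add_one_le_exp _
  rw [abs_of_nonpos (by linarith), abs_of_nonneg (by linarith)]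
  nlinarith [Real.exp_pos (-y)]

private lemma abs_clamp_sub_le {x y C : ℝ} (h0 : 0 ≤ y) (hC : y ≤ C) :
    |min (max x 0) C - y| ≤ |x - y| := by
  rw [abs_le]
  constructor
  · rcases le_total x C with hx | hx
    · have hx2 : x ≤ min (max x 0) C := le_min (le_max_left _ _) hx
      have := neg_abs_le (x - y); linarith
    · have h1 : y ≤ min (max x 0) C := le_min (hC.trans (hx.trans (le_max_left x 0))) hC
      have := abs_nonneg (x - y); linarith
  · rcases le_total x 0 with hx | hx
    · have h1 : min (max x 0) C ≤ 0 := by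
        simpa [max_eq_right hx] using min_le_left (0:ℝ) C
      have := abs_nonneg (x - y); linarith
    · have h1 : min (max x 0) C ≤ x := (min_le_left _ _).trans (by simp [max_eq_left hx])
      have := le_abs_self (x - y); linarith

private lemma keyA_cont (g : ℝ → ℝ) (hg : Continuous g) (b : ℝ) :
    ∫ t in (0:ℝ)..b, Real.exp (-∫ s in (0:ℝ)..t, g s) * g t
      = 1 - Real.exp (-∫ s in (0:ℝ)..b, g s) := by
  have hFc : Continuous fun u => ∫ s in (0:ℝ)..u, g s :=
    intervalIntegral.continuous_primitive (fun a b => hg.intervalIntegrable a b) 0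
  have hd : ∀ t ∈ Set.uIcc (0:ℝ) b,
      HasDerivAt (fun u => 1 - Real.exp (-∫ s in (0:ℝ)..u, g s))
        (Real.exp (-∫ s in (0:ℝ)..t, g s) * g t) t := by
    intro t _
    have h1 : HasDerivAt (fun u => ∫ s in (0:ℝ)..u, g s) (g t) t :=
      (hg.integral_hasStrictDerivAt 0 t).hasDerivAt
    have h2 := ((h1.neg).exp).const_sub 1
    refine h2.congr_deriv ?_
    simp only [Pi.neg_apply]; ring
  have hint : IntervalIntegrable (fun t => Real.exp (-∫ s in (0:ℝ)..t, g s) * g t)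
      volume 0 b :=
    ((Real.continuous_exp.comp hFc.neg).mul hg).intervalIntegrable 0 b
  have := intervalIntegral.integral_eq_sub_of_hasDerivAt hd hint
  rw [this]
  simp

private lemma keyA' (g : ℝ → ℝ) (hg : Measurable g) {M : ℝ} (h0 : ∀ t, 0 ≤ g t)
    (hM : ∀ t, g t ≤ M) (hint : Integrable g volume) {b : ℝ} (hb : 0 ≤ b) :
    ∫ t in (0:ℝ)..b, Real.exp (-∫ s in (0:ℝ)..t, g s) * g t
      = 1 - Real.exp (-∫ s in (0:ℝ)..b, g s) := by
  have hM0 : (0:ℝ) ≤ M := (h0 0).trans (hM 0)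
  -- an approximating sequence of continuous functions
  have approx : ∀ n : ℕ, ∃ ψ : ℝ → ℝ, Continuous ψ ∧ (∀ t, 0 ≤ ψ t) ∧ (∀ t, ψ t ≤ M) ∧
      Integrable ψ volume ∧ (∫ x, |g x - ψ x|) ≤ 1 / (n + 1) := by
    intro n
    obtain ⟨φ, hφc, hφe, hφcont, hφint⟩ :=
      hint.exists_hasCompactSupport_integral_sub_le (ε := 1 / (n+1)) (by positivity)
    have hψcont : Continuous fun t => min (max (φ t) 0) M :=
      (hφcont.max continuous_const).min continuous_const
    have hψsupp : HasCompactSupport fun t => min (max (φ t) 0) M := by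
      have : ((fun x : ℝ => min (max x 0) M) ∘ φ) = fun t => min (max (φ t) 0) M := rfl
      rw [← this]
      exact hφc.comp_left (by simp [hM0])
    have hψint : Integrable (fun t => min (max (φ t) 0) M) volume :=
      hψcont.integrable_of_hasCompactSupport hψsupp
    refine ⟨_, hψcont, fun t => le_min (le_max_right _ _) hM0, fun t => min_le_right _ _,
      hψint, ?_⟩
    refine le_trans (integral_mono (hint.sub hψint).abs (hint.sub hφint).norm ?_) hφe
    intro x
    show |g x - min (max (φ x) 0) M| ≤ ‖(g - φ) x‖
    rw [Pi.sub_apply, Real.norm_eq_abs,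
      show |g x - min (max (φ x) 0) M| = |min (max (φ x) 0) M - g x| from abs_sub_comm _ _,
      show |g x - φ x| = |φ x - g x| from abs_sub_comm _ _]
    exact abs_clamp_sub_le (h0 x) (hM x)
  choose ψ hψc hψ0 hψM hψint hψe using approx
  set F : ℝ → ℝ := fun t => ∫ s in (0:ℝ)..t, g s with hF
  set Fn : ℕ → ℝ → ℝ := fun n t => ∫ s in (0:ℝ)..t, ψ n s with hFn
  set ε : ℕ → ℝ := fun n => ∫ x, |g x - ψ n x| with hε
  have hε0 : ∀ n, 0 ≤ ε n := fun n => integral_nonneg fun x => abs_nonneg _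
  have hFcont : Continuous F := hint.continuous_primitive 0
  have hFn_cont : ∀ n, Continuous (Fn n) := fun n =>
    intervalIntegral.continuous_primitive (fun a b => (hψc n).intervalIntegrable a b) 0
  have hF0 : ∀ t, 0 ≤ t → 0 ≤ F t := fun t ht =>
    intervalIntegral.integral_nonneg ht fun s _ => h0 s
  have hFn0 : ∀ n t, 0 ≤ t → 0 ≤ Fn n t := fun n t ht =>
    intervalIntegral.integral_nonneg ht fun s _ => hψ0 n s
  have hclose : ∀ n, ∀ t, 0 ≤ t → |F t - Fn n t| ≤ ε n := by
    intro n t ht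
    have h1 : F t - Fn n t = ∫ s in (0:ℝ)..t, (g s - ψ n s) :=
      (intervalIntegral.integral_sub hint.intervalIntegrable
        ((hψc n).intervalIntegrable _ _)).symm
    rw [h1]
    refine le_trans (intervalIntegral.abs_integral_le_integral_abs ht) ?_
    rw [intervalIntegral.integral_of_le ht, hε]
    exact setIntegral_le_integral (hint.sub (hψint n)).abs (ae_of_all _ fun x => abs_nonneg _)
  -- integrability of the integrands
  have hmeasI : Measurable fun t => Real.exp (-F t) * g t :=
    ((Real.measurable_exp.comp hFcont.measurable.neg).mul hg)
  have hII : IntervalIntegrable (fun t => Real.exp (-F t) * g t) volume 0 b := by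
    refine bddII hmeasI (C := M) ?_
    intro t ht
    rw [Set.uIoc_of_le hb] at ht
    have he : Real.exp (-F t) ≤ 1 := by
      calc Real.exp (-F t) ≤ Real.exp 0 := Real.exp_le_exp.2 (by linarith [hF0 t ht.1.le])
      _ = 1 := Real.exp_zero
    rw [abs_of_nonneg (mul_nonneg (Real.exp_pos _).le (h0 t))]
    nlinarith [mul_nonneg (sub_nonneg.2 he) (h0 t), hM t]
  have hIIn : ∀ n, IntervalIntegrable (fun t => Real.exp (-Fn n t) * ψ n t) volume 0 b :=
    fun n => ((Real.continuous_exp.comp (hFn_cont n).neg).mul (hψc n)).intervalIntegrable 0 b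
  -- the main estimate
  have key : ∀ n : ℕ,
      |(∫ t in (0:ℝ)..b, Real.exp (-F t) * g t) - (1 - Real.exp (-F b))|
        ≤ (2 + b * M) * (1 / (n + 1)) := by
    intro n
    have hLn := keyA_cont (ψ n) (hψc n) b
    -- |L - Ln| estimate
    have hptwise : ∀ t ∈ Icc (0:ℝ) b,
        |Real.exp (-F t) * g t - Real.exp (-Fn n t) * ψ n t| ≤ |g t - ψ n t| + ε n * M := by
      intro t ht
      have hid : Real.exp (-F t) * g t - Real.exp (-Fn n t) * ψ n t
          = Real.exp (-F t) * (g t - ψ n t)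
            + (Real.exp (-F t) - Real.exp (-Fn n t)) * ψ n t := by ring
      rw [hid]
      refine le_trans (abs_add_le _ _) (add_le_add ?_ ?_)
      · rw [abs_mul, abs_of_nonneg (Real.exp_pos _).le]
        have he : Real.exp (-F t) ≤ 1 := by
          calc Real.exp (-F t) ≤ Real.exp 0 := Real.exp_le_exp.2 (by linarith [hF0 t ht.1])
          _ = 1 := Real.exp_zero
        nlinarith [mul_nonneg (sub_nonneg.2 he) (abs_nonneg (g t - ψ n t))]
      · rw [abs_mul]
        have h1 : |Real.exp (-F t) - Real.exp (-Fn n t)| ≤ ε n :=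
          le_trans (abs_exp_neg_sub_exp_neg (hF0 t ht.1) (hFn0 n t ht.1)) (hclose n t ht.1)
        have h2 : |ψ n t| ≤ M := by
          rw [abs_of_nonneg (hψ0 n t)]; exact hψM n t
        exact mul_le_mul h1 h2 (abs_nonneg _) (hε0 n)
    have hLdiff : |(∫ t in (0:ℝ)..b, Real.exp (-F t) * g t)
        - (∫ t in (0:ℝ)..b, Real.exp (-Fn n t) * ψ n t)| ≤ ε n + b * M * ε n := by
      rw [← intervalIntegral.integral_sub hII (hIIn n)]
      refine le_trans (intervalIntegral.abs_integral_le_integral_abs hb) ?_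
      have hInt1 : IntervalIntegrable
          (fun t => |Real.exp (-F t) * g t - Real.exp (-Fn n t) * ψ n t|) volume 0 b :=
        ((hII.sub (hIIn n)).abs)
      have hInt2 : IntervalIntegrable (fun t => |g t - ψ n t| + ε n * M) volume 0 b :=
        (hint.intervalIntegrable.sub ((hψc n).intervalIntegrable 0 b)).abs.add
          (intervalIntegrable_const)
      refine le_trans (intervalIntegral.integral_mono_on hb hInt1 hInt2 hptwise) ?_
      rw [intervalIntegral.integral_add
        ((hint.intervalIntegrable.sub ((hψc n).intervalIntegrable 0 b)).abs)
        intervalIntegrable_const, intervalIntegral.integral_const]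
      have h1 : (∫ t in (0:ℝ)..b, |g t - ψ n t|) ≤ ε n := by
        rw [intervalIntegral.integral_of_le hb]
        exact setIntegral_le_integral (hint.sub (hψint n)).abs
          (ae_of_all _ fun x => abs_nonneg _)
      have h2 : (b - 0) • (ε n * M) = b * M * ε n := by
        rw [smul_eq_mul]; ring
      rw [h2]; linarith
    have hRdiff : |Real.exp (-Fn n b) - Real.exp (-F b)| ≤ ε n :=
      le_trans (abs_exp_neg_sub_exp_neg (hFn0 n b hb) (hF0 b hb)) (by
        rw [abs_sub_comm]; exact hclose n b hb)
    have hcomb : |(∫ t in (0:ℝ)..b, Real.exp (-F t) * g t) - (1 - Real.exp (-F b))|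
        ≤ (ε n + b * M * ε n) + ε n := by
      have e1 : (∫ t in (0:ℝ)..b, Real.exp (-F t) * g t) - (1 - Real.exp (-F b))
          = ((∫ t in (0:ℝ)..b, Real.exp (-F t) * g t)
              - (∫ t in (0:ℝ)..b, Real.exp (-Fn n t) * ψ n t))
            + ((1 - Real.exp (-Fn n b)) - (1 - Real.exp (-F b))) := by
        rw [← hLn]; ring
      rw [e1]
      refine le_trans (abs_add_le _ _) (add_le_add hLdiff ?_)
      have : (1 - Real.exp (-Fn n b)) - (1 - Real.exp (-F b))
          = Real.exp (-F b) - Real.exp (-Fn n b) := by ring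
      rw [this, abs_sub_comm]
      exact hRdiff
    refine le_trans hcomb ?_
    have hb1 : ε n + b * M * ε n + ε n = (2 + b * M) * ε n := by ring
    rw [hb1]
    exact mul_le_mul_of_nonneg_left (hψe n) (by nlinarith)
  have hlim : Tendsto (fun n : ℕ => (2 + b * M) * (1 / (n + 1))) atTop (𝓝 0) := by
    have := tendsto_one_div_add_atTop_nhds_zero_nat.const_mul (2 + b * M)
    simpa using this
  have habs : |(∫ t in (0:ℝ)..b, Real.exp (-F t) * g t) - (1 - Real.exp (-F b))| ≤ 0 :=
    ge_of_tendsto hlim (Eventually.of_forall key)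
  have := abs_nonneg ((∫ t in (0:ℝ)..b, Real.exp (-F t) * g t) - (1 - Real.exp (-F b)))
  have hz : |(∫ t in (0:ℝ)..b, Real.exp (-F t) * g t) - (1 - Real.exp (-F b))| = 0 :=
    le_antisymm habs this
  rw [abs_eq_zero, sub_eq_zero] at hz
  exact hz

private lemma keyA (g : ℝ → ℝ) (hg : Measurable g) {M : ℝ} (h0 : ∀ t, 0 ≤ g t)
    (hM : ∀ t, g t ≤ M) {b : ℝ} (hb : 0 ≤ b) :
    ∫ t in (0:ℝ)..b, Real.exp (-∫ s in (0:ℝ)..t, g s) * g t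
      = 1 - Real.exp (-∫ s in (0:ℝ)..b, g s) := by
  have hM0 : (0:ℝ) ≤ M := (h0 0).trans (hM 0)
  set g₁ : ℝ → ℝ := Set.indicator (Icc 0 b) g with hg₁
  have h0' : ∀ t, 0 ≤ g₁ t := by
    intro t; rw [hg₁]
    by_cases h : t ∈ Icc (0:ℝ) b
    · rw [Set.indicator_of_mem h]; exact h0 t
    · rw [Set.indicator_of_notMem h]
  have hM1 : ∀ t, g₁ t ≤ M := by
    intro t; rw [hg₁]
    by_cases h : t ∈ Icc (0:ℝ) b
    · rw [Set.indicator_of_mem h]; exact hM t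
    · rw [Set.indicator_of_notMem h]; exact hM0
  have hmeas1 : Measurable g₁ := hg.indicator measurableSet_Icc
  have hint1 : Integrable g₁ volume := by
    rw [hg₁, integrable_indicator_iff measurableSet_Icc]
    refine (integrableOn_const (C := M) measure_Icc_lt_top.ne).mono'
      hg.aestronglyMeasurable.restrict ?_
    exact ae_of_all _ fun t => by
      rw [Real.norm_eq_abs, abs_of_nonneg (h0 t)]; exact hM t
  have hinner : ∀ t ∈ Icc (0:ℝ) b, (∫ s in (0:ℝ)..t, g s) = ∫ s in (0:ℝ)..t, g₁ s := by
    intro t ht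
    apply intervalIntegral.integral_congr
    intro s hs
    rw [Set.uIcc_of_le ht.1] at hs
    rw [hg₁, Set.indicator_apply, if_pos (show s ∈ Icc (0:ℝ) b from ⟨hs.1, hs.2.trans ht.2⟩)]
  have hLHS : (∫ t in (0:ℝ)..b, Real.exp (-∫ s in (0:ℝ)..t, g s) * g t)
      = ∫ t in (0:ℝ)..b, Real.exp (-∫ s in (0:ℝ)..t, g₁ s) * g₁ t := by
    apply intervalIntegral.integral_congr
    intro t ht
    rw [Set.uIcc_of_le hb] at ht
    show Real.exp (-∫ s in (0:ℝ)..t, g s) * g t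
        = Real.exp (-∫ s in (0:ℝ)..t, g₁ s) * g₁ t
    rw [hinner t ht, hg₁, Set.indicator_apply, if_pos ht]
  rw [hLHS, hinner b ⟨hb, le_rfl⟩]
  exact keyA' g₁ hmeas1 h0' hM1 hint1 hb

private lemma keyB (g : ℝ → ℝ) (hg : Measurable g) {M : ℝ} (hM : ∀ t, |g t| ≤ M)
    {T : ℝ} (hT : 0 ≤ T) :
    Tendsto (fun y : ℝ => ∫ t in (0:ℝ)..T, |g t - g (y + t)|) (𝓝 0) (𝓝 0) := by
  have tri : ∀ a b : ℝ, |a - b| ≤ |a| + |b| := fun a b => by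
    have := abs_add_le a (-b); simpa [sub_eq_add_neg] using this
  rw [Metric.tendsto_nhds_nhds]
  intro ε hε
  set g₁ : ℝ → ℝ := Set.indicator (Icc (-1) (T+1)) g with hg₁
  have hmeas1 : Measurable g₁ := hg.indicator measurableSet_Icc
  have hM1 : ∀ t, |g₁ t| ≤ M := by
    intro t
    rw [hg₁]
    by_cases h : t ∈ Icc (-1:ℝ) (T+1)
    · rw [Set.indicator_of_mem h]; exact hM t
    · rw [Set.indicator_of_notMem h, abs_zero]; exact (abs_nonneg _).trans (hM 0)
  have hint1 : Integrable g₁ volume := by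
    rw [hg₁, integrable_indicator_iff measurableSet_Icc]
    refine (integrableOn_const (C := M) measure_Icc_lt_top.ne).mono'
      hg.aestronglyMeasurable.restrict (ae_of_all _ fun t => by
        rw [Real.norm_eq_abs]; exact hM t)
  obtain ⟨φ, hφc, hφe, hφcont, hφint⟩ :=
    hint1.exists_hasCompactSupport_integral_sub_le (ε := ε/8) (by linarith)
  have hφu : UniformContinuous φ := hφc.uniformContinuous_of_continuous hφcont
  obtain ⟨δ₀, hδ₀pos, hδ₀⟩ := Metric.uniformContinuous_iff.1 hφu (ε / (4 * (T + 1)))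
    (by positivity)
  refine ⟨min δ₀ 1, by positivity, ?_⟩
  intro y hy
  rw [Real.dist_eq, sub_zero] at hy
  have hy1 : |y| < 1 := lt_of_lt_of_le hy (min_le_right _ _)
  have hyδ : |y| < δ₀ := lt_of_lt_of_le hy (min_le_left _ _)
  rw [Real.dist_eq, sub_zero]
  have hcongr : (∫ t in (0:ℝ)..T, |g t - g (y + t)|)
      = ∫ t in (0:ℝ)..T, |g₁ t - g₁ (y + t)| := by
    apply intervalIntegral.integral_congr
    intro t ht
    rw [Set.uIcc_of_le hT] at ht
    have h1 : t ∈ Icc (-1:ℝ) (T+1) := ⟨by linarith [ht.1], by linarith [ht.2]⟩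
    have h2 : y + t ∈ Icc (-1:ℝ) (T+1) := by
      constructor
      · have := neg_abs_le y; linarith [ht.1]
      · have := le_abs_self y; linarith [ht.2]
    show |g t - g (y + t)| = |g₁ t - g₁ (y + t)|
    rw [hg₁, Set.indicator_of_mem h1, Set.indicator_of_mem h2]
  rw [hcongr]
  set c : ℝ := ε / (4 * (T + 1)) with hc
  have hcpos : 0 < c := by positivity
  have hint_n : Integrable (fun x => ‖g₁ x - φ x‖) volume := (hint1.sub hφint).norm
  have hIy : IntervalIntegrable (fun t => ‖g₁ (y + t) - φ (y + t)‖) volume 0 T := by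
    have h := (hint_n.intervalIntegrable (a := y + 0) (b := y + T)).comp_add_left y
    simpa using h
  have hI3 : IntervalIntegrable (fun t => ‖g₁ t - φ t‖) volume 0 T := hint_n.intervalIntegrable
  have hptwise : ∀ t ∈ Icc (0:ℝ) T, |g₁ t - g₁ (y + t)|
      ≤ ‖g₁ (y + t) - φ (y + t)‖ + (c + ‖g₁ t - φ t‖) := by
    intro t ht
    have h2 : |φ t - φ (y + t)| ≤ c := by
      have hd : dist t (y + t) < δ₀ := by
        rw [Real.dist_eq, show t - (y + t) = -y by ring, abs_neg]; exact hyδ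
      have := hδ₀ hd
      rw [Real.dist_eq] at this
      exact this.le
    have e1 : |g₁ t - g₁ (y + t)|
        ≤ |g₁ t - φ t| + (|φ t - φ (y + t)| + |φ (y + t) - g₁ (y + t)|) := by
      have hsplit : g₁ t - g₁ (y + t)
          = (g₁ t - φ t) + ((φ t - φ (y + t)) + (φ (y + t) - g₁ (y + t))) := by ring
      rw [hsplit]
      exact le_trans (abs_add_le _ _) (add_le_add_right (abs_add_le _ _) _)
    have e2 : |φ (y + t) - g₁ (y + t)| = ‖g₁ (y + t) - φ (y + t)‖ := by
      rw [Real.norm_eq_abs, abs_sub_comm]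
    have e3 : |g₁ t - φ t| = ‖g₁ t - φ t‖ := (Real.norm_eq_abs _).symm
    rw [e2, e3] at e1
    linarith
  have hLint : IntervalIntegrable (fun t => |g₁ t - g₁ (y + t)|) volume 0 T := by
    refine bddII (show Measurable fun t => |g₁ t - g₁ (y + t)| from
      (hmeas1.sub (hmeas1.comp (measurable_id.const_add y))).abs) (C := 2*M) ?_
    intro t _
    rw [abs_abs]
    exact (tri _ _).trans (by linarith [hM1 t, hM1 (y + t)])
  have hRint : IntervalIntegrable
      (fun t => ‖g₁ (y + t) - φ (y + t)‖ + (c + ‖g₁ t - φ t‖)) volume 0 T :=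
    hIy.add (intervalIntegrable_const.add hI3)
  rw [abs_of_nonneg (intervalIntegral.integral_nonneg hT fun u _ => abs_nonneg _)]
  refine lt_of_le_of_lt (intervalIntegral.integral_mono_on hT hLint hRint hptwise) ?_
  rw [intervalIntegral.integral_add hIy (intervalIntegrable_const.add hI3),
      intervalIntegral.integral_add intervalIntegrable_const hI3,
      intervalIntegral.integral_const]
  have hb1 : (∫ t in (0:ℝ)..T, ‖g₁ (y + t) - φ (y + t)‖) ≤ ε/8 := by
    rw [intervalIntegral.integral_comp_add_left (fun u => ‖g₁ u - φ u‖) y,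
        intervalIntegral.integral_of_le (by linarith : y + 0 ≤ y + T)]
    exact le_trans (setIntegral_le_integral hint_n (ae_of_all _ fun x => norm_nonneg _)) hφe
  have hb3 : (∫ t in (0:ℝ)..T, ‖g₁ t - φ t‖) ≤ ε/8 := by
    rw [intervalIntegral.integral_of_le hT]
    exact le_trans (setIntegral_le_integral hint_n (ae_of_all _ fun x => norm_nonneg _)) hφe
  have hb2 : (T - 0) • c ≤ ε/4 := by
    rw [smul_eq_mul, sub_zero]
    have hT1 : (0:ℝ) < T + 1 := by linarith
    have e : (T + 1) * c = ε / 4 := by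
      rw [hc]; field_simp
    nlinarith
  linarith

/-- Proposition 3.7: the merging probability `P(k,y)` tends to `1` as the age
discrepancy `y` tends to `0⁺`, provided the rates are continuous at `0`. -/
theorem stmt_4 (m : ℕ) (hm : 1 ≤ m) (lam : Fin m → Fin m → ℝ → ℝ) (k : Fin m)
    (hmeas : ∀ k k' : Fin m, k' ≠ k → Measurable (lam k k'))
    (hpos : ∀ (k k' : Fin m), k' ≠ k → ∀ y : ℝ, 0 ≤ y → 0 < lam k k' y)
    (hbdd : ∀ k k' : Fin m, k' ≠ k → ∃ M : ℝ, ∀ y : ℝ, 0 ≤ y → lam k k' y ≤ M)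
    (hcont : ∀ k k' : Fin m, k' ≠ k → ContinuousAt (lam k k') 0)
    (hdiv : Tendsto (fun y : ℝ =>
        ∫ t in (0:ℝ)..y, ∑ k' ∈ Finset.univ.erase k, lam k k' t) atTop atTop)
    (P : ℝ → ℝ)
    (hP : ∀ y : ℝ, P y =
      ∫ y' in Ioi (0:ℝ),
        Real.exp (-∫ t in (0:ℝ)..y',
            ∑ k' ∈ Finset.univ.erase k, max (lam k k' t) (lam k k' (y + t)))
          * (∑ k' ∈ Finset.univ.erase k, min (lam k k' y') (lam k k' (y + y')))) :
    Tendsto P (nhdsWithin 0 (Ioi 0)) (nhds 1) := by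
  classical
  set E := Finset.univ.erase k with hE
  have hEne : ∀ k' ∈ E, k' ≠ k := fun k' h => Finset.ne_of_mem_erase h
  have hbdd' : ∀ k' : Fin m, ∃ C : ℝ, k' ∈ E → ∀ t, 0 ≤ t → lam k k' t ≤ C := by
    intro k'
    by_cases h : k' ∈ E
    · obtain ⟨C, hC⟩ := hbdd k k' (hEne k' h)
      exact ⟨C, fun _ => hC⟩
    · exact ⟨0, fun h' => absurd h' h⟩
  choose Mb hMb using hbdd'
  set lamE : Fin m → ℝ → ℝ := fun k' t => lam k k' (max t 0) with hlamE
  have hm' : ∀ k' ∈ E, Measurable (lamE k') := fun k' h =>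
    (hmeas k k' (hEne k' h)).comp (measurable_id.max measurable_const)
  have hp' : ∀ k' ∈ E, ∀ t : ℝ, 0 < lamE k' t := fun k' h t =>
    hpos k k' (hEne k' h) _ (le_max_right t 0)
  have hb' : ∀ k' ∈ E, ∀ t : ℝ, lamE k' t ≤ Mb k' := fun k' h t =>
    hMb k' h _ (le_max_right t 0)
  set M' : ℝ := ∑ k' ∈ E, Mb k' with hM'
  set A : ℝ → ℝ → ℝ := fun y t => ∑ k' ∈ E, max (lamE k' t) (lamE k' (y + t)) with hA
  set Bf : ℝ → ℝ → ℝ := fun y t => ∑ k' ∈ E, min (lamE k' t) (lamE k' (y + t)) with hBf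
  set f : ℝ → ℝ := fun t => ∑ k' ∈ E, lamE k' t with hfdef
  have hA0 : ∀ y t, 0 ≤ A y t := fun y t =>
    Finset.sum_nonneg fun k' h => le_trans (hp' k' h t).le (le_max_left _ _)
  have hAM : ∀ y t, A y t ≤ M' := fun y t =>
    Finset.sum_le_sum fun k' h => max_le (hb' k' h t) (hb' k' h _)
  have hfA : ∀ y t, f t ≤ A y t := fun y t =>
    Finset.sum_le_sum fun k' _ => le_max_left _ _
  have hf0 : ∀ t, 0 ≤ f t := fun t => Finset.sum_nonneg fun k' h => (hp' k' h t).le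
  have hfM : ∀ t, f t ≤ M' := fun t => Finset.sum_le_sum fun k' h => hb' k' h t
  have hB0 : ∀ y t, 0 ≤ Bf y t := fun y t =>
    Finset.sum_nonneg fun k' h => le_min (hp' k' h t).le (hp' k' h _).le
  have hBA : ∀ y t, Bf y t ≤ A y t := fun y t =>
    Finset.sum_le_sum fun k' _ => min_le_max
  have hABD : ∀ y t, A y t - Bf y t = ∑ k' ∈ E, |lamE k' t - lamE k' (y + t)| := by
    intro y t
    show (∑ k' ∈ E, max (lamE k' t) (lamE k' (y + t)))
        - (∑ k' ∈ E, min (lamE k' t) (lamE k' (y + t)))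
        = ∑ k' ∈ E, |lamE k' t - lamE k' (y + t)|
    rw [← Finset.sum_sub_distrib]
    exact Finset.sum_congr rfl fun k' _ => (max_sub_min_eq_abs _ _).trans (abs_sub_comm _ _)
  have hAmeas : ∀ y, Measurable (A y) := fun y =>
    Finset.measurable_sum _ fun k' h =>
      (hm' k' h).max ((hm' k' h).comp (measurable_id.const_add y))
  have hBmeas : ∀ y, Measurable (Bf y) := fun y =>
    Finset.measurable_sum _ fun k' h =>
      (hm' k' h).min ((hm' k' h).comp (measurable_id.const_add y))
  have hMnn : (0:ℝ) ≤ M' := le_trans (hf0 0) (hfM 0)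
  have hAII : ∀ y (a b : ℝ), IntervalIntegrable (A y) volume a b := fun y a b =>
    bddII (hAmeas y) (C := M') fun t _ => by
      rw [abs_of_nonneg (hA0 y t)]; exact hAM y t
  have hfII : ∀ a b : ℝ, IntervalIntegrable f volume a b := fun a b =>
    bddII (show Measurable f from Finset.measurable_sum _ fun k' h => hm' k' h)
      (C := M') fun t _ => by
      rw [abs_of_nonneg (hf0 t)]; exact hfM t
  have hFAcont : ∀ y, Continuous fun t => ∫ s in (0:ℝ)..t, A y s := fun y =>
    intervalIntegral.continuous_primitive (fun a b => hAII y a b) 0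
  have hFA0 : ∀ y (t : ℝ), 0 ≤ t → 0 ≤ ∫ s in (0:ℝ)..t, A y s := fun y t ht =>
    intervalIntegral.integral_nonneg ht fun s _ => hA0 y s
  have hexple : ∀ y (t : ℝ), 0 ≤ t → Real.exp (-∫ s in (0:ℝ)..t, A y s) ≤ 1 := by
    intro y t ht
    have h1 : Real.exp (-∫ s in (0:ℝ)..t, A y s) ≤ Real.exp 0 :=
      Real.exp_le_exp.2 (by linarith [hFA0 y t ht])
    rwa [Real.exp_zero] at h1
  set ψ : ℝ → ℝ → ℝ := fun y t => Real.exp (-∫ s in (0:ℝ)..t, A y s) * A y t with hψ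
  set Φ : ℝ → ℝ → ℝ := fun y t => Real.exp (-∫ s in (0:ℝ)..t, A y s) * Bf y t with hΦ
  have hψmeas : ∀ y, Measurable (ψ y) := fun y =>
    (Real.measurable_exp.comp (hFAcont y).measurable.neg).mul (hAmeas y)
  have hΦmeas : ∀ y, Measurable (Φ y) := fun y =>
    (Real.measurable_exp.comp (hFAcont y).measurable.neg).mul (hBmeas y)
  have hψ0 : ∀ y t, 0 ≤ ψ y t := fun y t => mul_nonneg (Real.exp_pos _).le (hA0 y t)
  have hΦ0 : ∀ y t, 0 ≤ Φ y t := fun y t => mul_nonneg (Real.exp_pos _).le (hB0 y t)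
  have hΦψ : ∀ y t, Φ y t ≤ ψ y t := fun y t =>
    mul_le_mul_of_nonneg_left (hBA y t) (Real.exp_pos _).le
  have hkey : ∀ y (b : ℝ), 0 ≤ b →
      (∫ t in (0:ℝ)..b, ψ y t) = 1 - Real.exp (-∫ s in (0:ℝ)..b, A y s) :=
    fun y b hb => keyA (A y) (hAmeas y) (hA0 y) (hAM y) hb
  have hψM : ∀ y (t : ℝ), 0 ≤ t → ψ y t ≤ M' := by
    intro y t ht
    show Real.exp (-∫ s in (0:ℝ)..t, A y s) * A y t ≤ M'
    nlinarith [mul_le_mul_of_nonneg_right (hexple y t ht) (hA0 y t), hAM y t]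
  have hψII : ∀ y (b : ℝ), 0 ≤ b → IntervalIntegrable (ψ y) volume 0 b := by
    intro y b hb
    refine bddII (hψmeas y) (C := M') ?_
    intro t ht
    rw [Set.uIoc_of_le hb] at ht
    rw [abs_of_nonneg (hψ0 y t)]
    exact hψM y t ht.1.le
  have hΦII : ∀ y (b : ℝ), 0 ≤ b → IntervalIntegrable (Φ y) volume 0 b := by
    intro y b hb
    refine bddII (hΦmeas y) (C := M') ?_
    intro t ht
    rw [Set.uIoc_of_le hb] at ht
    rw [abs_of_nonneg (hΦ0 y t)]
    exact le_trans (hΦψ y t) (hψM y t ht.1.le)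
  have hψIoi : ∀ y, IntegrableOn (ψ y) (Ioi (0:ℝ)) volume := by
    intro y
    refine integrableOn_Ioi_of_intervalIntegral_norm_bounded (f := ψ y) 1 0
      (b := fun n : ℕ => (n : ℝ)) (l := atTop)
      (fun n => (hψII y n (Nat.cast_nonneg n)).1) tendsto_natCast_atTop_atTop ?_
    refine Eventually.of_forall fun n => ?_
    have he : (∫ t in (0:ℝ)..(n:ℝ), ‖ψ y t‖) = ∫ t in (0:ℝ)..(n:ℝ), ψ y t := by
      apply intervalIntegral.integral_congr
      intro t _
      show ‖ψ y t‖ = ψ y t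
      rw [Real.norm_eq_abs, abs_of_nonneg (hψ0 y t)]
    rw [he, hkey y n (Nat.cast_nonneg n)]
    linarith [Real.exp_pos (-∫ s in (0:ℝ)..(n:ℝ), A y s)]
  have hΦIoi : ∀ y, IntegrableOn (Φ y) (Ioi (0:ℝ)) volume := by
    intro y
    refine (hψIoi y).mono' ((hΦmeas y).aestronglyMeasurable.restrict) ?_
    exact ae_of_all _ fun t => by
      rw [Real.norm_eq_abs, abs_of_nonneg (hΦ0 y t)]; exact hΦψ y t
  have hψle1 : ∀ y, (∫ t in Ioi (0:ℝ), ψ y t) ≤ 1 := by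
    intro y
    have ht := intervalIntegral_tendsto_integral_Ioi (a := 0) (hψIoi y)
      (tendsto_natCast_atTop_atTop (R := ℝ)) (b := fun n : ℕ => (n:ℝ))
    refine le_of_tendsto ht (Eventually.of_forall fun n => ?_)
    rw [hkey y n (Nat.cast_nonneg n)]
    linarith [Real.exp_pos (-∫ s in (0:ℝ)..(n:ℝ), A y s)]
  have hPeq : ∀ y : ℝ, 0 ≤ y → P y = ∫ t in Ioi (0:ℝ), Φ y t := by
    intro y hy
    rw [hP y]
    refine setIntegral_congr_fun measurableSet_Ioi ?_
    intro y' hy'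
    have hy'0 : (0:ℝ) < y' := hy'
    have hinner : (∫ t in (0:ℝ)..y', ∑ k' ∈ E, max (lam k k' t) (lam k k' (y + t)))
        = ∫ t in (0:ℝ)..y', A y t := by
      apply intervalIntegral.integral_congr
      intro t ht
      rw [Set.uIcc_of_le hy'0.le] at ht
      show (∑ k' ∈ E, max (lam k k' t) (lam k k' (y + t))) = A y t
      show (∑ k' ∈ E, max (lam k k' t) (lam k k' (y + t)))
          = ∑ k' ∈ E, max (lamE k' t) (lamE k' (y + t))
      refine Finset.sum_congr rfl fun k' _ => ?_
      show max (lam k k' t) (lam k k' (y + t))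
          = max (lam k k' (max t 0)) (lam k k' (max (y + t) 0))
      rw [max_eq_left ht.1, max_eq_left (by linarith [ht.1] : (0:ℝ) ≤ y + t)]
    have houter : (∑ k' ∈ E, min (lam k k' y') (lam k k' (y + y'))) = Bf y y' := by
      show (∑ k' ∈ E, min (lam k k' y') (lam k k' (y + y')))
          = ∑ k' ∈ E, min (lamE k' y') (lamE k' (y + y'))
      refine Finset.sum_congr rfl fun k' _ => ?_
      show min (lam k k' y') (lam k k' (y + y'))
          = min (lam k k' (max y' 0)) (lam k k' (max (y + y') 0))
      rw [max_eq_left hy'0.le, max_eq_left (by linarith : (0:ℝ) ≤ y + y')]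
    show Real.exp (-∫ t in (0:ℝ)..y', ∑ k' ∈ E, max (lam k k' t) (lam k k' (y + t)))
        * (∑ k' ∈ E, min (lam k k' y') (lam k k' (y + y'))) = Φ y y'
    rw [hinner, houter]
  have hPle : ∀ y : ℝ, 0 ≤ y → P y ≤ 1 := by
    intro y hy
    rw [hPeq y hy]
    exact le_trans (integral_mono (hΦIoi y) (hψIoi y) fun t => hΦψ y t) (hψle1 y)
  have hPlow : ∀ y : ℝ, 0 ≤ y → ∀ T : ℝ, 0 ≤ T →
      1 - Real.exp (-∫ s in (0:ℝ)..T, f s)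
        - (∫ t in (0:ℝ)..T, ∑ k' ∈ E, |lamE k' t - lamE k' (y + t)|) ≤ P y := by
    intro y hy T hT
    rw [hPeq y hy]
    have h1 : (∫ t in (0:ℝ)..T, Φ y t) ≤ ∫ t in Ioi (0:ℝ), Φ y t := by
      rw [intervalIntegral.integral_of_le hT]
      refine setIntegral_mono_set (hΦIoi y) (ae_of_all _ fun t => hΦ0 y t) ?_
      exact HasSubset.Subset.eventuallyLE Ioc_subset_Ioi_self
    have hdII : IntervalIntegrable (fun t => ψ y t - Φ y t) volume 0 T :=
      (hψII y T hT).sub (hΦII y T hT)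
    have hDII : IntervalIntegrable
        (fun t => ∑ k' ∈ E, |lamE k' t - lamE k' (y + t)|) volume 0 T := by
      refine bddII (show Measurable fun t => ∑ k' ∈ E, |lamE k' t - lamE k' (y + t)| from
        Finset.measurable_sum _ fun k' h =>
          ((hm' k' h).sub ((hm' k' h).comp (measurable_id.const_add y))).abs) (C := M') ?_
      intro t _
      have h0D : (0:ℝ) ≤ ∑ k' ∈ E, |lamE k' t - lamE k' (y + t)| :=
        Finset.sum_nonneg fun k' _ => abs_nonneg _
      rw [abs_of_nonneg h0D]
      refine Finset.sum_le_sum fun k' h => ?_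
      have h1' := hb' k' h t; have h2' := hb' k' h (y + t)
      have h3' := hp' k' h t; have h4' := hp' k' h (y + t)
      rw [abs_le]
      constructor <;> linarith
    have hsub : (∫ t in (0:ℝ)..T, Φ y t)
        = (∫ t in (0:ℝ)..T, ψ y t) - ∫ t in (0:ℝ)..T, (ψ y t - Φ y t) := by
      rw [← intervalIntegral.integral_sub (hψII y T hT) hdII]
      apply intervalIntegral.integral_congr
      intro t _
      show Φ y t = ψ y t - (ψ y t - Φ y t)
      ring
    have hDle : (∫ t in (0:ℝ)..T, (ψ y t - Φ y t))
        ≤ ∫ t in (0:ℝ)..T, ∑ k' ∈ E, |lamE k' t - lamE k' (y + t)| := by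
      refine intervalIntegral.integral_mono_on hT hdII hDII ?_
      intro t ht
      have e1 : ψ y t - Φ y t
          = Real.exp (-∫ s in (0:ℝ)..t, A y s) * (A y t - Bf y t) := by
        show Real.exp (-∫ s in (0:ℝ)..t, A y s) * A y t
            - Real.exp (-∫ s in (0:ℝ)..t, A y s) * Bf y t
            = Real.exp (-∫ s in (0:ℝ)..t, A y s) * (A y t - Bf y t)
        ring
      rw [e1, hABD y t]
      have h2 : (0:ℝ) ≤ ∑ k' ∈ E, |lamE k' t - lamE k' (y + t)| :=
        Finset.sum_nonneg fun k' _ => abs_nonneg _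
      have h3 := mul_le_mul_of_nonneg_right (hexple y t ht.1) h2
      linarith
    have hψval := hkey y T hT
    have hexpf : Real.exp (-∫ s in (0:ℝ)..T, A y s)
        ≤ Real.exp (-∫ s in (0:ℝ)..T, f s) := by
      apply Real.exp_le_exp.2
      simp only [neg_le_neg_iff]
      exact intervalIntegral.integral_mono_on hT (hfII 0 T) (hAII y 0 T) fun t _ => hfA y t
    linarith
  have hDto : ∀ T : ℝ, 0 ≤ T →
      Tendsto (fun y : ℝ => ∫ t in (0:ℝ)..T, ∑ k' ∈ E, |lamE k' t - lamE k' (y + t)|)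
        (𝓝 0) (𝓝 0) := by
    intro T hT
    have heq : ∀ y : ℝ, (∫ t in (0:ℝ)..T, ∑ k' ∈ E, |lamE k' t - lamE k' (y + t)|)
        = ∑ k' ∈ E, ∫ t in (0:ℝ)..T, |lamE k' t - lamE k' (y + t)| := by
      intro y
      apply intervalIntegral.integral_finset_sum
      intro k' h
      refine bddII (show Measurable fun t => |lamE k' t - lamE k' (y + t)| from
        ((hm' k' h).sub ((hm' k' h).comp (measurable_id.const_add y))).abs)
        (C := Mb k') ?_
      intro t _
      rw [abs_abs]
      have h1' := hb' k' h t; have h2' := hb' k' h (y + t)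
      have h3' := hp' k' h t; have h4' := hp' k' h (y + t)
      rw [abs_le]
      constructor <;> linarith
    have hsum : Tendsto
        (fun y : ℝ => ∑ k' ∈ E, ∫ t in (0:ℝ)..T, |lamE k' t - lamE k' (y + t)|)
        (𝓝 0) (𝓝 (∑ k' ∈ E, (0:ℝ))) := by
      refine tendsto_finset_sum _ fun k' h => ?_
      refine keyB (lamE k') (hm' k' h) (M := Mb k') ?_ hT
      intro t
      rw [abs_of_nonneg (hp' k' h t).le]
      exact hb' k' h t
    simpa [heq] using hsum
  have hfdiv : Tendsto (fun T : ℝ => ∫ t in (0:ℝ)..T, f t) atTop atTop := by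
    refine Filter.Tendsto.congr' ?_ hdiv
    filter_upwards [eventually_ge_atTop (0:ℝ)] with T hT
    apply intervalIntegral.integral_congr
    intro t ht
    rw [Set.uIcc_of_le hT] at ht
    show (∑ k' ∈ E, lam k k' t) = f t
    show (∑ k' ∈ E, lam k k' t) = ∑ k' ∈ E, lamE k' t
    refine Finset.sum_congr rfl fun k' _ => ?_
    show lam k k' t = lam k k' (max t 0)
    rw [max_eq_left ht.1]
  rw [Metric.tendsto_nhdsWithin_nhds]
  intro ε hε
  have hT' := hfdiv.eventually_gt_atTop (Real.log (2/ε))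
  rw [eventually_atTop] at hT'
  obtain ⟨T₀, hT₀⟩ := hT'
  set T := max T₀ 0 with hTdef
  have hT0 : (0:ℝ) ≤ T := le_max_right _ _
  have hTgt : Real.log (2/ε) < ∫ t in (0:ℝ)..T, f t := hT₀ T (le_max_left _ _)
  have hexpT : Real.exp (-∫ t in (0:ℝ)..T, f t) < ε/2 := by
    have h2ε : (0:ℝ) < 2/ε := by positivity
    have h1 : 2/ε < Real.exp (∫ t in (0:ℝ)..T, f t) := by
      have := Real.exp_lt_exp.2 hTgt
      rwa [Real.exp_log h2ε] at this
    rw [Real.exp_neg]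
    have h3 : (Real.exp (∫ t in (0:ℝ)..T, f t))⁻¹ < (2/ε)⁻¹ :=
      inv_strictAnti₀ h2ε h1
    have h4 : ((2:ℝ)/ε)⁻¹ = ε/2 := by field_simp
    linarith
  obtain ⟨δ, hδpos, hδ⟩ := Metric.tendsto_nhds_nhds.1 (hDto T hT0) (ε/2) (by linarith)
  refine ⟨δ, hδpos, ?_⟩
  intro y hy hyd
  have hy0 : (0:ℝ) < y := hy
  have hD := hδ hyd
  rw [Real.dist_eq, sub_zero] at hD
  have hDlt : (∫ t in (0:ℝ)..T, ∑ k' ∈ E, |lamE k' t - lamE k' (y + t)|) < ε/2 :=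
    lt_of_le_of_lt (le_abs_self _) hD
  have hlow := hPlow y hy0.le T hT0
  have hup := hPle y hy0.le
  rw [Real.dist_eq, abs_of_nonpos (by linarith)]
  linarith
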